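/- The function v₁(ε₁) = -(1 + W₀(e/ε₁))/W₀(e/ε₁), where W₀ is the principal branch of the Lambert W function, solves the ODE dv₁/dε₁ = (v₁+1)²/(ε₁ v₁) for ε₁ > 0 with the initial condition v₁(1) = -2, and satisfies v₁(ε₁) → -1 as ε₁ → 0⁺. -/

import Mathlib

open Filter Topology


lemma lamE_mono : StrictMonoOn (fun x : ℝ => x * Real.exp x) (Set.Ici (-1)) := by
  apply strictMonoOn_of_deriv_pos (convex_Ici _)
  · exact (continuous_id.mul Real.continuous_exp).continuousOn
  · intro x hx
    rw [interior_Ici] at hx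
    have h : HasDerivAt (fun x : ℝ => x * Real.exp x) (1 * Real.exp x + x * Real.exp x) x :=
      (hasDerivAt_id x).mul (Real.hasDerivAt_exp x)
    rw [h.deriv]
    nlinarith [Real.exp_pos x, Set.mem_Ioi.mp hx]

lemma lamE_uniq {a b : ℝ} (ha : -1 ≤ a) (hb : -1 ≤ b)
    (h : a * Real.exp a = b * Real.exp b) : a = b :=
  lamE_mono.injOn ha hb h

/-- the explicit inverse function -/
noncomputable def lamF (v : ℝ) : ℝ := -(1+v) * Real.exp (1 + (1+v)⁻¹)

lemma lamF_pos {v : ℝ} (hv : v < -1) : 0 < lamF v :=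
  mul_pos (by linarith) (Real.exp_pos _)

section W
variable (W₀ : ℝ → ℝ)
  (hW : ∀ z : ℝ, -Real.exp (-1) ≤ z → W₀ z * Real.exp (W₀ z) = z ∧ -1 ≤ W₀ z)
include hW

/-- basic facts for positive arguments -/
lemma W_pos {z : ℝ} (hz : 0 < z) :
    0 < W₀ z ∧ W₀ z * Real.exp (W₀ z) = z := by
  obtain ⟨h1, h2⟩ := hW z (le_of_lt (lt_trans (neg_neg_iff_pos.mpr (Real.exp_pos _)) hz))
  refine ⟨?_, h1⟩
  by_contra h
  push_neg at h
  nlinarith [Real.exp_pos (W₀ z)]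

lemma W_of_lamF {v : ℝ} (hv : v < -1) :
    W₀ (Real.exp 1 / lamF v) = -(1+v)⁻¹ := by
  have hu : 1 + v < 0 := by linarith
  have hu' : (1 + v) ≠ 0 := ne_of_lt hu
  have hz : 0 < Real.exp 1 / lamF v := div_pos (Real.exp_pos _) (lamF_pos hv)
  obtain ⟨hpos, heq⟩ := W_pos W₀ hW hz
  have hwpos : 0 < -(1+v)⁻¹ := by
    have : (1+v)⁻¹ < 0 := inv_lt_zero.mpr hu
    linarith
  refine lamE_uniq (by linarith [hW _ (le_of_lt (lt_trans (neg_neg_iff_pos.mpr (Real.exp_pos _)) hz))]) (by linarith) ?_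
  have he := Real.exp_ne_zero ((1+v)⁻¹)
  have key : -(1+v)⁻¹ * Real.exp (-(1+v)⁻¹) = Real.exp 1 / lamF v := by
    unfold lamF
    rw [Real.exp_neg, Real.exp_add, eq_div_iff
      (mul_pos (by linarith : (0:ℝ) < -(1+v)) (by positivity)).ne']
    calc -(1+v)⁻¹ * (Real.exp ((1+v)⁻¹))⁻¹ * (-(1+v) * (Real.exp 1 * Real.exp ((1+v)⁻¹)))
        = ((1+v) * (1+v)⁻¹) * (Real.exp ((1+v)⁻¹) * (Real.exp ((1+v)⁻¹))⁻¹) * Real.exp 1 := by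
          ring
      _ = Real.exp 1 := by rw [mul_inv_cancel₀ hu', mul_inv_cancel₀ he]; ring
  rw [heq]
  exact key.symm

variable (v₁ : ℝ → ℝ)
  (hv₁ : ∀ ε₁ : ℝ, 0 < ε₁ →
    v₁ ε₁ = -(1 + W₀ (Real.exp 1 / ε₁)) / W₀ (Real.exp 1 / ε₁))
include hv₁

lemma v1_val {ε : ℝ} (hε : 0 < ε) :
    v₁ ε = -1 - (W₀ (Real.exp 1 / ε))⁻¹ := by
  obtain ⟨hpos, _⟩ := W_pos W₀ hW (div_pos (Real.exp_pos 1) hε)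
  rw [hv₁ ε hε]
  field_simp
  ring

lemma v1_lt {ε : ℝ} (hε : 0 < ε) : v₁ ε < -1 := by
  obtain ⟨hpos, _⟩ := W_pos W₀ hW (div_pos (Real.exp_pos 1) hε)
  rw [v1_val W₀ hW v₁ hv₁ hε]
  have : 0 < (W₀ (Real.exp 1 / ε))⁻¹ := inv_pos.mpr hpos
  linarith

lemma v1_lamF {v : ℝ} (hv : v < -1) : v₁ (lamF v) = v := by
  rw [v1_val W₀ hW v₁ hv₁ (lamF_pos hv), W_of_lamF W₀ hW hv, inv_neg, inv_inv]
  ring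

lemma lamF_v1 {ε : ℝ} (hε : 0 < ε) : lamF (v₁ ε) = ε := by
  obtain ⟨hpos, heq⟩ := W_pos W₀ hW (div_pos (Real.exp_pos 1) hε)
  set w := W₀ (Real.exp 1 / ε) with hw
  have hprod : w * Real.exp w * ε = Real.exp 1 := by
    rw [heq]; field_simp
  rw [v1_val W₀ hW v₁ hv₁ hε]
  unfold lamF
  rw [show (1 + (-1 - w⁻¹)) = -w⁻¹ from by ring, inv_neg, inv_inv, neg_neg,
    show (1 + -w : ℝ) = 1 - w from by ring, Real.exp_sub, ← hprod]
  field_simp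

lemma v1_anti : StrictAntiOn v₁ (Set.Ioi 0) := by
  intro x hx y hy hxy
  simp only [Set.mem_Ioi] at hx hy
  obtain ⟨hpx, heqx⟩ := W_pos W₀ hW (div_pos (Real.exp_pos 1) hx)
  obtain ⟨hpy, heqy⟩ := W_pos W₀ hW (div_pos (Real.exp_pos 1) hy)
  have hlt : W₀ (Real.exp 1 / y) < W₀ (Real.exp 1 / x) := by
    by_contra h
    push_neg at h
    have h2 := lamE_mono.monotoneOn (by simp; linarith : W₀ (Real.exp 1 / x) ∈ Set.Ici (-1:ℝ))
      (by simp; linarith : W₀ (Real.exp 1 / y) ∈ Set.Ici (-1:ℝ)) h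
    simp only [heqx, heqy] at h2
    have : Real.exp 1 / y < Real.exp 1 / x :=
      div_lt_div_of_pos_left (Real.exp_pos 1) hx hxy
    linarith
  rw [v1_val W₀ hW v₁ hv₁ hx, v1_val W₀ hW v₁ hv₁ hy]
  have := inv_strictAnti₀ hpy hlt
  linarith

end W

/-- For any function `W₀` satisfying the defining property of the principal
branch of the Lambert W function (`W₀(z) e^{W₀(z)} = z` and `W₀(z) ≥ -1` for
`z ≥ -1/e`), the function `v₁(ε₁) = -(1 + W₀(e/ε₁))/W₀(e/ε₁)` solves
`dv₁/dε₁ = (v₁+1)²/(ε₁ v₁)` on `(0,∞)`, satisfies `v₁(1) = -2`, and tends to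
`-1` as `ε₁ → 0⁺`. -/
theorem stmt_6 (W₀ : ℝ → ℝ)
    (hW : ∀ z : ℝ, -Real.exp (-1) ≤ z →
      W₀ z * Real.exp (W₀ z) = z ∧ -1 ≤ W₀ z)
    (v₁ : ℝ → ℝ)
    (hv₁ : ∀ ε₁ : ℝ, 0 < ε₁ →
      v₁ ε₁ = -(1 + W₀ (Real.exp 1 / ε₁)) / W₀ (Real.exp 1 / ε₁)) :
    v₁ 1 = -2 ∧
    (∀ ε₁ : ℝ, 0 < ε₁ →
      HasDerivAt v₁ ((v₁ ε₁ + 1) ^ 2 / (ε₁ * v₁ ε₁)) ε₁) ∧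
    Tendsto v₁ (𝓝[>] 0) (𝓝 (-1)) := by
  refine ⟨?_, ?_, ?_⟩
  · -- initial condition
    have h1 : W₀ (Real.exp 1 / 1) = 1 := by
      obtain ⟨hpos, heq⟩ := W_pos W₀ hW (div_pos (Real.exp_pos 1) one_pos)
      apply lamE_uniq (by linarith) (by norm_num)
      rw [heq]
      simp
    rw [hv₁ 1 one_pos, h1]
    norm_num
  · -- the ODE
    intro ε hε
    have hv : v₁ ε < -1 := v1_lt W₀ hW v₁ hv₁ hε
    set v := v₁ ε with hvdef
    have hu : 1 + v < 0 := by linarith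
    have hu' : (1 + v) ≠ 0 := ne_of_lt hu
    have hεeq : lamF v = ε := lamF_v1 W₀ hW v₁ hv₁ hε
    -- continuity of v₁ at ε
    have hcont : ContinuousAt v₁ ε := by
      have hmono : StrictMonoOn (fun x => -v₁ x) (Set.Ioi 0) :=
        fun a ha b hb hab => neg_lt_neg (v1_anti W₀ hW v₁ hv₁ ha hb hab)
      have himg : (fun x => -v₁ x) '' Set.Ioi 0 ∈ 𝓝 (-v₁ ε) := by
        apply mem_of_superset (isOpen_Ioi.mem_nhds (show (1:ℝ) < -v₁ ε by linarith))
        intro t ht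
        simp only [Set.mem_Ioi] at ht
        have htlt : -t < -1 := by linarith
        refine ⟨lamF (-t), lamF_pos htlt, ?_⟩
        show -v₁ (lamF (-t)) = t
        rw [v1_lamF W₀ hW v₁ hv₁ htlt]
        ring
      have := hmono.continuousAt_of_image_mem_nhds (isOpen_Ioi.mem_nhds hε) himg
      simpa only [Pi.neg_def, neg_neg] using this.neg
    -- derivative of lamF at v
    have h1 : HasDerivAt (fun x : ℝ => 1 + x) 1 v := by
      simpa using (hasDerivAt_id v).const_add 1
    have h2 : HasDerivAt (fun x : ℝ => (1 + x)⁻¹) (-1 / (1 + v) ^ 2) v := h1.inv hu'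
    have h3 : HasDerivAt (fun x : ℝ => 1 + (1 + x)⁻¹) (-1 / (1 + v) ^ 2) v := h2.const_add 1
    have h4 : HasDerivAt (fun x : ℝ => Real.exp (1 + (1 + x)⁻¹))
        (Real.exp (1 + (1 + v)⁻¹) * (-1 / (1 + v) ^ 2)) v := h3.exp
    have h5 : HasDerivAt (fun x : ℝ => -(1 + x)) (-1) v := h1.neg
    have hf : HasDerivAt lamF
        ((-1) * Real.exp (1 + (1 + v)⁻¹) +
          (-(1 + v)) * (Real.exp (1 + (1 + v)⁻¹) * (-1 / (1 + v) ^ 2))) v := h5.mul h4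
    set D := (-1) * Real.exp (1 + (1 + v)⁻¹) +
      (-(1 + v)) * (Real.exp (1 + (1 + v)⁻¹) * (-1 / (1 + v) ^ 2)) with hDdef
    have hDval : D = Real.exp (1 + (1 + v)⁻¹) * (-v) / (1 + v) := by
      rw [hDdef]
      field_simp
      ring
    have hD0 : D ≠ 0 := by
      rw [hDval]
      have hnum : 0 < Real.exp (1 + (1 + v)⁻¹) * (-v) :=
        mul_pos (Real.exp_pos _) (by linarith)
      exact ne_of_lt (div_neg_of_pos_of_neg hnum hu)
    have hev : ∀ᶠ x in 𝓝 ε, lamF (v₁ x) = x := by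
      filter_upwards [isOpen_Ioi.mem_nhds hε] with x hx
      exact lamF_v1 W₀ hW v₁ hv₁ hx
    have hinv : HasDerivAt v₁ D⁻¹ ε :=
      HasDerivAt.of_local_left_inverse hcont hf hD0 hev
    convert hinv using 1
    rw [hDval, ← hεeq]
    unfold lamF
    have hv0 : v ≠ 0 := by linarith
    set E := Real.exp (1 + (1 + v)⁻¹) with hE
    have he0 : E ≠ 0 := Real.exp_ne_zero _
    have hden : -(v * E) - v ^ 2 * E ≠ 0 := by
      have hd : -(v * E) - v ^ 2 * E = -v * E * (1 + v) := by ring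
      rw [hd]
      exact mul_ne_zero (mul_ne_zero (neg_ne_zero.mpr hv0) he0) hu'
    rw [inv_div]
    field_simp [hden]
    linear_combination 0 * mul_inv_cancel₀ hden
  · -- the limit
    have hlogtop : Tendsto (fun ε : ℝ => 1 - Real.log ε) (𝓝[>] 0) atTop := by
      have h := Real.tendsto_log_nhdsGT_zero
      have h2 : Tendsto (fun ε : ℝ => -Real.log ε) (𝓝[>] 0) atTop :=
        tendsto_neg_atTop_iff.mpr h
      exact tendsto_atTop_add_const_left _ 1 h2 |>.congr (fun x => by ring)
    have hbnd : Tendsto (fun ε : ℝ => 2 / (1 - Real.log ε)) (𝓝[>] 0) (𝓝 0) :=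
      tendsto_const_nhds.div_atTop hlogtop
    have hlow : Tendsto (fun ε : ℝ => -1 - 2 / (1 - Real.log ε)) (𝓝[>] 0) (𝓝 (-1)) := by
      have := hbnd.const_sub (-1)
      simpa using this
    apply tendsto_of_tendsto_of_tendsto_of_le_of_le' hlow
      (tendsto_const_nhds : Tendsto (fun _ : ℝ => (-1:ℝ)) (𝓝[>] 0) (𝓝 (-1)))
    · filter_upwards [Ioo_mem_nhdsGT_of_mem (Set.mem_Ico.mpr ⟨le_rfl, one_pos⟩)] with ε hε
      obtain ⟨hε0, hε1⟩ := hε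
      obtain ⟨hpos, heq⟩ := W_pos W₀ hW (div_pos (Real.exp_pos 1) hε0)
      set w := W₀ (Real.exp 1 / ε) with hw
      have hlog : 0 < 1 - Real.log ε := by
        have := Real.log_neg hε0 hε1
        linarith
      have hwlb : (1 - Real.log ε) / 2 < w := by
        have hwe : w < Real.exp w := by
          have := Real.add_one_le_exp w
          linarith
        have hlt : Real.exp 1 / ε < Real.exp (2 * w) := by
          rw [show 2 * w = w + w by ring, Real.exp_add]
          calc Real.exp 1 / ε = w * Real.exp w := heq.symm
            _ < Real.exp w * Real.exp w := by
                exact mul_lt_mul_of_pos_right hwe (Real.exp_pos w)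
        have hlog2 : Real.log (Real.exp 1 / ε) < 2 * w :=
          (Real.log_lt_iff_lt_exp (div_pos (Real.exp_pos 1) hε0)).mpr hlt
        rw [Real.log_div (Real.exp_ne_zero 1) (ne_of_gt hε0), Real.log_exp] at hlog2
        linarith
      have hinvw : w⁻¹ < 2 / (1 - Real.log ε) := by
        have h2 := inv_strictAnti₀ (by linarith : (0:ℝ) < (1 - Real.log ε) / 2) hwlb
        rwa [inv_div] at h2
      rw [v1_val W₀ hW v₁ hv₁ hε0]
      linarith
    · filter_upwards [self_mem_nhdsWithin] with ε hε
      exact le_of_lt (v1_lt W₀ hW v₁ hv₁ hε)
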